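/- arXiv:0903.1586 — 2 statements merged into one kernel-verified Lean document; each statement's English description precedes it below -/
import Mathlib

section
/- Let H ∈ 𝓗 and let M be a kG-module of dimension r. Then H is M-excellent if and only if H is (M,χ)-acceptable for every linear character χ : G → k^× of G. -/
open Module LinearMap

/-- An element of `GL(V)` is a *reflection* if it has finite order and its fixed
subspace `ker (g - 1)` is a hyperplane of `V`. -/
def IsReflection {k : Type*} [Field k] {V : Type*} [AddCommGroup V] [Module k V]
    (g : (V →ₗ[k] V)ˣ) : Prop :=
  IsOfFinOrder g ∧
    Module.finrank k (LinearMap.ker ((g : V →ₗ[k] V) - LinearMap.id)) + 1 = Module.finrank k V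

/-- The set of reflecting hyperplanes of a subgroup `G` of `GL(V)`. -/
def reflHyperplanes {k : Type*} [Field k] {V : Type*} [AddCommGroup V] [Module k V]
    (G : Subgroup (V →ₗ[k] V)ˣ) : Set (Submodule k V) :=
  {H | ∃ s ∈ G, IsReflection s ∧ H = LinearMap.ker ((s : V →ₗ[k] V) - LinearMap.id)}

/-- `(G, V)` is a reflection group: `G` is generated by its reflections. -/
def IsReflectionGroup {k : Type*} [Field k] {V : Type*} [AddCommGroup V] [Module k V]
    (G : Subgroup (V →ₗ[k] V)ˣ) : Prop :=
  G = Subgroup.closure {g | g ∈ G ∧ IsReflection g}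

/-- `n_{j,H}(N)` : the multiplicity of `ζ^j` as an eigenvalue of `s = s_H` acting on the
dual module `N*` (via the dual representation). -/
noncomputable def nJ {k : Type*} [Field k] {G : Type*} [Group G] {N : Type*} [AddCommGroup N]
    [Module k N] (ρ : Representation k G N) (s : G) (ζ : k) (j : ℕ) : ℕ :=
  Module.finrank k (Module.End.eigenspace (ρ.dual s) (ζ ^ j))

/-- `n_H(N) = ∑_{j=0}^{e_H - 1} j · n_{j,H}(N)`. -/
noncomputable def nH {k : Type*} [Field k] {G : Type*} [Group G] {N : Type*} [AddCommGroup N]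
    [Module k N] (ρ : Representation k G N) (s : G) (ζ : k) (e : ℕ) : ℕ :=
  ∑ j ∈ Finset.range e, j * nJ ρ s ζ j

/-- A linear endomorphism acts as the identity or as a reflection. -/
def ActsAsIdOrReflection {k : Type*} [Field k] {N : Type*} [AddCommGroup N] [Module k N]
    (f : N →ₗ[k] N) : Prop :=
  f = LinearMap.id ∨
    (IsOfFinOrder f ∧
      Module.finrank k (LinearMap.ker (f - LinearMap.id)) + 1 = Module.finrank k N)

/-- `H` is `(M,χ)`-acceptable: writing the restriction of `M` to `G_H` as
`det^{-j_1} ⊕ ⋯ ⊕ det^{-j_r}` with `0 ≤ j_i ≤ e_H - 1` (equivalently, there is a basis of `M*`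
on which `s_H` acts with eigenvalues `ζ_H^{j_i}`), for all disjoint subsets `I₁, I₂` of
`{1, …, r}` one has `∑_{i ∈ I₁} j_i < e_H - n_H(χ)` or `∑_{i ∈ I₂} j_i < e_H - n_H(χ)`. -/
def IsAcceptable {k : Type*} [Field k] {G : Type*} [Group G] {M : Type*} [AddCommGroup M]
    [Module k M] (ρ : Representation k G M) (s : G) (ζ : k) (e r nχ : ℕ) : Prop :=
  ∀ j : Fin r → ℕ, (∀ i, j i < e) →
    (∃ y : Basis (Fin r) k (Module.Dual k M),
      ∀ i, ρ.dual s (y i) = ζ ^ (j i) • y i) →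
    ∀ I₁ I₂ : Finset (Fin r), Disjoint I₁ I₂ →
      ((∑ i ∈ I₁, j i) < e - nχ ∨ (∑ i ∈ I₂, j i) < e - nχ)

open Polynomial in
theorem finrank_ker_dualMap_sub_id {k W : Type*} [Field k] [AddCommGroup W] [Module k W]
    [FiniteDimensional k W] (g : W →ₗ[k] W) :
    finrank k (LinearMap.ker (g.dualMap - LinearMap.id)) =
      finrank k (LinearMap.ker (g - LinearMap.id)) := by
  have h1 : g.dualMap - LinearMap.id = (g - LinearMap.id).dualMap := by
    ext φ x; simp [LinearMap.dualMap_apply]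
  have hker := LinearMap.ker_dualMap_eq_dualAnnihilator_range (g - LinearMap.id)
  rw [h1, hker]
  have h2 : finrank k (W ⧸ LinearMap.range (g - LinearMap.id)) =
      finrank k ((LinearMap.range (g - LinearMap.id)).dualAnnihilator) :=
    (Subspace.quotEquivAnnihilator (LinearMap.range (g - LinearMap.id))).finrank_eq
  have h3 := Submodule.finrank_quotient_add_finrank (LinearMap.range (g - LinearMap.id))
  have h4 := LinearMap.finrank_range_add_finrank_ker (g - LinearMap.id)
  omega

theorem finrank_ker_of_eigenbasis {k W : Type*} [Field k] [AddCommGroup W] [Module k W]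
    [FiniteDimensional k W] (f : W →ₗ[k] W) {r : ℕ} (y : Basis (Fin r) k W) (c : Fin r → k)
    (hy : ∀ i, f (y i) = c i • y i) :
    finrank k (LinearMap.ker (f - LinearMap.id)) = Nat.card {i : Fin r // c i = 1} := by
  classical
  set S : Finset (Fin r) := Finset.univ.filter (fun i => c i = 1) with hS
  have hcard : Nat.card {i : Fin r // c i = 1} = S.card := by
    rw [Nat.card_eq_fintype_card, Fintype.card_subtype]
  have hspan : LinearMap.ker (f - LinearMap.id) = Submodule.span k (y '' ↑S) := by
    apply le_antisymm
    · intro x hx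
      rw [LinearMap.mem_ker] at hx
      replace hx : f x = x := sub_eq_zero.mp (by simpa [LinearMap.sub_apply] using hx)
      rw [Basis.mem_span_image]
      intro i hi
      simp only [Finsupp.mem_support_iff, Finset.mem_coe] at hi
      simp only [hS, Finset.mem_coe, Finset.mem_filter, Finset.mem_univ, true_and]
      by_contra hci
      apply hi
      have hfx : f x = ∑ i, (c i * y.repr x i) • y i := by
        conv_lhs => rw [← y.sum_repr x]
        rw [map_sum]
        refine Finset.sum_congr rfl fun j _ => ?_
        rw [map_smul, hy j, smul_smul, mul_comm]
      have h1 : ⇑(y.repr (f x)) = fun i => c i * y.repr x i := by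
        rw [hfx]; exact y.repr_sum_self _
      rw [hx] at h1
      have h2 : c i * y.repr x i = y.repr x i := (congrFun h1 i).symm
      have h3 : (c i - 1) * y.repr x i = 0 := by rw [sub_mul, one_mul, h2, sub_self]
      rcases mul_eq_zero.mp h3 with h | h
      · exact absurd (sub_eq_zero.mp h) hci
      · exact h
    · rw [Submodule.span_le]
      rintro _ ⟨i, hi, rfl⟩
      simp only [hS, Finset.mem_coe, Finset.mem_filter, Finset.mem_univ, true_and] at hi
      simp [SetLike.mem_coe, LinearMap.mem_ker, LinearMap.sub_apply, hy i, hi]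
  rw [hspan, hcard]
  have himg : y '' ↑S = Set.range (fun i : ↥S => y (i : Fin r)) := Set.image_eq_range _ _
  have hfin := finrank_span_eq_card (R := k)
    (b := fun i : ↥S => y (i : Fin r)) (y.linearIndependent.comp _ Subtype.val_injective)
  rw [himg, hfin]
  simp

open Polynomial in
theorem exists_eigenbasis {k W : Type*} [Field k] [IsAlgClosed k] [CharZero k]
    [AddCommGroup W] [Module k W] [FiniteDimensional k W]
    (f : Module.End k W) {e : ℕ} (he : 0 < e) (hf : f ^ e = 1) {ζ : k}
    (hζ : IsPrimitiveRoot ζ e) {r : ℕ} (hr : finrank k W = r) :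
    ∃ (j : Fin r → ℕ) (y : Basis (Fin r) k W), (∀ i, j i < e) ∧
      ∀ i, f (y i) = ζ ^ (j i) • y i := by
  classical
  haveI : NeZero e := ⟨he.ne'⟩
  have hsep : ((X : k[X]) ^ e - 1).Separable :=
    Polynomial.X_pow_sub_one_separable_iff.mpr (Nat.cast_ne_zero.mpr he.ne')
  have haeval : Polynomial.aeval f ((X : k[X]) ^ e - 1) = 0 := by
    simp [map_sub, map_pow, hf]
  have hss : f.IsSemisimple :=
    Module.End.isSemisimple_of_squarefree_aeval_eq_zero hsep.squarefree haeval
  have hfs : f.IsFinitelySemisimple :=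
    (Module.End.isFinitelySemisimple_iff_isSemisimple).mpr hss
  have htop : ⨆ μ : k, f.eigenspace μ = ⊤ := by
    have h := Module.End.iSup_maxGenEigenspace_eq_top f
    simp_rw [hfs.maxGenEigenspace_eq_eigenspace] at h
    exact h
  have hind := Module.End.eigenspaces_iSupIndep f
  have hInt := DirectSum.isInternal_submodule_of_iSupIndep_of_iSup_eq_top hind htop
  let b := hInt.collectedBasis (fun μ => Module.finBasis k (f.eigenspace μ))
  haveI : Fintype (Σ μ : k, Fin (finrank k (f.eigenspace μ))) :=
    FiniteDimensional.fintypeBasisIndex b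
  have hcard : Fintype.card (Σ μ : k, Fin (finrank k (f.eigenspace μ))) = r := by
    rw [← Module.finrank_eq_card_basis b, hr]
  let eqv := Fintype.equivFinOfCardEq hcard
  let y := b.reindex eqv
  have hy : ∀ i : Fin r, f (y i) = (eqv.symm i).1 • y i := by
    intro i
    have hmem : y i ∈ f.eigenspace (eqv.symm i).1 := by
      rw [Basis.reindex_apply]
      exact hInt.collectedBasis_mem (fun μ => Module.finBasis k (f.eigenspace μ)) (eqv.symm i)
    exact Module.End.mem_eigenspace_iff.mp hmem
  have hroot : ∀ i : Fin r, ((eqv.symm i).1) ^ e = 1 := by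
    intro i
    have hpow : ∀ n, (f ^ n) (y i) = ((eqv.symm i).1) ^ n • y i := by
      intro n
      induction n with
      | zero => simp
      | succ n ih =>
          rw [pow_succ, Module.End.mul_apply, hy i, map_smul, ih, smul_smul, pow_succ]
          ring_nf
    have h1 : ((eqv.symm i).1) ^ e • y i = y i := by
      rw [← hpow, hf]; rfl
    have h2 : (((eqv.symm i).1) ^ e - 1) • y i = 0 := by
      rw [sub_smul, one_smul, h1, sub_self]
    rcases smul_eq_zero.mp h2 with h | h
    · exact sub_eq_zero.mp h
    · exact absurd h (y.ne_zero i)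
  have spec : ∀ i : Fin r, ∃ m, m < e ∧ ζ ^ m = (eqv.symm i).1 := fun i =>
    hζ.eq_pow_of_pow_eq_one (hroot i)
  choose j hj1 hj2 using spec
  exact ⟨j, y, hj1, fun i => by rw [hy i, hj2 i]⟩

/-- `H` is `M`-excellent iff `H` is `(M,χ)`-acceptable for every linear
character `χ : G → k^×` of `G`. -/
theorem statement1
    {k : Type*} [Field k] [CharZero k] [IsAlgClosed k]
    {V : Type*} [AddCommGroup V] [Module k V] [FiniteDimensional k V]
    (G : Subgroup (V →ₗ[k] V)ˣ) (hGfin : Finite G) (hG : IsReflectionGroup G)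
    {M : Type*} [AddCommGroup M] [Module k M] [FiniteDimensional k M]
    (ρ : Representation k G M) (r : ℕ) (hr : Module.finrank k M = r)
    (H : Submodule k V) (hH : H ∈ reflHyperplanes G)
    (e : ℕ) (s : G) (ζ : k)
    (hfix : ∀ v ∈ H, ((s : (V →ₗ[k] V)ˣ) : V →ₗ[k] V) v = v)
    (hgen : ∀ g : G, (∀ v ∈ H, ((g : (V →ₗ[k] V)ˣ) : V →ₗ[k] V) v = v) →
      g ∈ Subgroup.zpowers s)
    (he : orderOf s = e)
    (hdet : LinearMap.det ((s : (V →ₗ[k] V)ˣ) : V →ₗ[k] V) = ζ)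
    (hζ : IsPrimitiveRoot ζ e) :
    ActsAsIdOrReflection (ρ s) ↔
      ∀ (χ : G →* kˣ) (nχ : ℕ), nχ < e → ((χ s : k) = (ζ ^ nχ)⁻¹) →
        IsAcceptable ρ s ζ e r nχ := by
  classical
  haveI : Finite G := hGfin
  have he0 : 0 < e := he ▸ orderOf_pos s
  have hse : s ^ e = 1 := by rw [← he]; exact pow_orderOf_eq_one s
  set f : Module.End k (Module.Dual k M) := ρ.dual s with hf
  have hfe : f ^ e = 1 := by
    rw [hf, ← map_pow, hse, map_one]
  have hρe : (ρ s) ^ e = 1 := by rw [← map_pow, hse, map_one]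
  -- key rank identity
  have hdualmap : f = (ρ s⁻¹).dualMap := by
    ext φ x; rfl
  have hkerinv : LinearMap.ker (ρ s⁻¹ - LinearMap.id) = LinearMap.ker (ρ s - LinearMap.id) := by
    have hcomp1 : ∀ x : M, ρ s⁻¹ (ρ s x) = x := fun x => by
      rw [← Module.End.mul_apply, ← map_mul, inv_mul_cancel, map_one, Module.End.one_apply]
    have hcomp2 : ∀ x : M, ρ s (ρ s⁻¹ x) = x := fun x => by
      rw [← Module.End.mul_apply, ← map_mul, mul_inv_cancel, map_one, Module.End.one_apply]
    ext x
    simp only [LinearMap.mem_ker, LinearMap.sub_apply, LinearMap.id_apply, sub_eq_zero]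
    constructor
    · intro h
      have h2 := congrArg (ρ s) h
      rw [hcomp2] at h2
      exact h2.symm
    · intro h
      have h2 := congrArg (ρ s⁻¹) h
      rw [hcomp1] at h2
      exact h2.symm
  have hkey : finrank k (LinearMap.ker (f - LinearMap.id)) =
      finrank k (LinearMap.ker (ρ s - LinearMap.id)) := by
    rw [hdualmap, finrank_ker_dualMap_sub_id, hkerinv]
  constructor
  · -- forward direction
    intro hAct χ nχ hnχ hχval
    intro j hj hbasis I₁ I₂ hdisj
    obtain ⟨y, hy⟩ := hbasis
    have hA : finrank k (LinearMap.ker (f - LinearMap.id)) =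
        Nat.card {i : Fin r // ζ ^ (j i) = 1} :=
      finrank_ker_of_eigenbasis f y (fun i => ζ ^ (j i)) hy
    have hbig : r - 1 ≤ Nat.card {i : Fin r // ζ ^ (j i) = 1} := by
      rw [← hA, hkey]
      rcases hAct with h | ⟨-, h⟩
      · have : LinearMap.ker (ρ s - LinearMap.id) = ⊤ := by
          rw [h, sub_self, LinearMap.ker_zero]
        rw [this, finrank_top, hr]
        omega
      · rw [hr] at h
        omega
    -- at most one index has j i ≠ 0
    have hzero : (∀ i ∈ I₁, j i = 0) ∨ (∀ i ∈ I₂, j i = 0) := by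
      by_contra hcon
      push_neg at hcon
      obtain ⟨⟨i₁, hi₁, hji₁⟩, ⟨i₂, hi₂, hji₂⟩⟩ := hcon
      have hne : i₁ ≠ i₂ := fun h => (Finset.disjoint_left.mp hdisj hi₁) (h ▸ hi₂)
      have hn₁ : ζ ^ (j i₁) ≠ 1 := hζ.pow_ne_one_of_pos_of_lt hji₁ (hj i₁)
      have hn₂ : ζ ^ (j i₂) ≠ 1 := hζ.pow_ne_one_of_pos_of_lt hji₂ (hj i₂)
      classical
      have hnt : Nontrivial {i : Fin r // ζ ^ (j i) ≠ 1} :=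
        ⟨⟨i₁, hn₁⟩, ⟨i₂, hn₂⟩, fun h => hne (congrArg Subtype.val h)⟩
      have h2le : 2 ≤ Fintype.card {i : Fin r // ζ ^ (j i) ≠ 1} :=
        Fintype.one_lt_card_iff_nontrivial.mpr hnt
      have hcompl : Fintype.card {i : Fin r // ζ ^ (j i) ≠ 1} =
          Fintype.card (Fin r) - Fintype.card {i : Fin r // ζ ^ (j i) = 1} :=
        Fintype.card_subtype_compl _
      have hle : Fintype.card {i : Fin r // ζ ^ (j i) = 1} ≤ Fintype.card (Fin r) :=
        Fintype.card_subtype_le _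
      rw [Nat.card_eq_fintype_card] at hbig
      have hrpos : 0 < r := i₁.pos
      simp only [Fintype.card_fin] at hcompl hle
      omega
    rcases hzero with h | h
    · left
      rw [Finset.sum_eq_zero h]
      omega
    · right
      rw [Finset.sum_eq_zero h]
      omega
  · -- reverse direction
    intro hAll
    by_contra hAct
    have hfinord : IsOfFinOrder (ρ s) :=
      isOfFinOrder_iff_pow_eq_one.mpr ⟨e, he0, hρe⟩
    rw [ActsAsIdOrReflection] at hAct
    push_neg at hAct
    obtain ⟨hid, hdim⟩ := hAct
    have hdim' := hdim hfinord
    rw [hr] at hdim'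
    have hkerne : LinearMap.ker (ρ s - LinearMap.id) ≠ ⊤ := by
      intro htop
      apply hid
      ext x
      have hx : x ∈ LinearMap.ker (ρ s - LinearMap.id) := by rw [htop]; trivial
      rw [LinearMap.mem_ker, LinearMap.sub_apply, sub_eq_zero] at hx
      exact hx
    have hlt : finrank k (LinearMap.ker (ρ s - LinearMap.id)) < finrank k M :=
      Submodule.finrank_lt hkerne
    rw [hr] at hlt
    have hker2 : finrank k (LinearMap.ker (ρ s - LinearMap.id)) + 2 ≤ r := by omega
    -- eigenbasis for f
    have hrdual : finrank k (Module.Dual k M) = r := by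
      rw [Subspace.dual_finrank_eq, hr]
    obtain ⟨j, y, hj, hy⟩ := exists_eigenbasis f he0 hfe hζ hrdual
    have hA : finrank k (LinearMap.ker (f - LinearMap.id)) =
        Nat.card {i : Fin r // ζ ^ (j i) = 1} :=
      finrank_ker_of_eigenbasis f y (fun i => ζ ^ (j i)) hy
    classical
    have hsmall : Nat.card {i : Fin r // ζ ^ (j i) = 1} + 2 ≤ r := by
      rw [← hA, hkey]; omega
    rw [Nat.card_eq_fintype_card] at hsmall
    have hcompl : Fintype.card {i : Fin r // ζ ^ (j i) ≠ 1} =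
        Fintype.card (Fin r) - Fintype.card {i : Fin r // ζ ^ (j i) = 1} :=
      Fintype.card_subtype_compl _
    simp only [Fintype.card_fin] at hcompl
    have h2le : 2 ≤ Fintype.card {i : Fin r // ζ ^ (j i) ≠ 1} := by omega
    haveI hnt : Nontrivial {i : Fin r // ζ ^ (j i) ≠ 1} :=
      Fintype.one_lt_card_iff_nontrivial.mp h2le
    obtain ⟨⟨i₁, hn₁⟩, ⟨i₂, hn₂⟩, hne12⟩ := exists_pair_ne {i : Fin r // ζ ^ (j i) ≠ 1}
    have hne : i₁ ≠ i₂ := fun h => hne12 (Subtype.ext h)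
    have hj₁pos : 0 < j i₁ := by
      rcases Nat.eq_zero_or_pos (j i₁) with h | h
      · exact absurd (by rw [h, pow_zero]) hn₁
      · exact h
    have hj₂pos : 0 < j i₂ := by
      rcases Nat.eq_zero_or_pos (j i₂) with h | h
      · exact absurd (by rw [h, pow_zero]) hn₂
      · exact h
    set m := min (j i₁) (j i₂) with hm
    have hm1 : 1 ≤ m := le_min hj₁pos hj₂pos
    have hmlt : m < e := lt_of_le_of_lt (min_le_left _ _) (hj i₁)
    set nχ := e - m with hnχdef
    have hnχlt : nχ < e := by omega
    -- the character det ^ m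
    set detHom : G →* kˣ := (Units.map (LinearMap.det : (V →ₗ[k] V) →* k)).comp G.subtype
      with hdetHom
    have hdets : ((detHom s : kˣ) : k) = ζ := by
      rw [hdetHom]
      simp only [MonoidHom.comp_apply, Units.coe_map, MonoidHom.coe_coe]
      exact hdet
    set χ : G →* kˣ := detHom ^ m with hχ
    have hχs : ((χ s : kˣ) : k) = ζ ^ m := by
      rw [hχ]
      simp only [MonoidHom.pow_apply, Units.val_pow_eq_pow_val, hdets]
    have hχval : ((χ s : kˣ) : k) = (ζ ^ nχ)⁻¹ := by
      rw [hχs]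
      refine eq_inv_of_mul_eq_one_left ?_
      rw [← pow_add]
      have hsum : m + nχ = e := by omega
      rw [hsum, hζ.pow_eq_one]
    have hacc := hAll χ nχ hnχlt hχval
    have := hacc j hj ⟨y, hy⟩ {i₁} {i₂} (Finset.disjoint_singleton.mpr hne)
    simp only [Finset.sum_singleton] at this
    have hem : e - nχ = m := by omega
    rw [hem] at this
    rcases this with h | h
    · exact absurd h (by omega)
    · exact absurd h (by omega)
end

section
/- Let M be a kG-module of dimension r, χ a linear character of G, and assume every hyperplane in 𝒢 is M-good. Set 𝒢_0 = {H ∈ 𝒢 : n_H(M) = 0}, 𝒢_+ = {H ∈ 𝒢 : n_H(M) ≥ e_H − n_H(χ)}, 𝒢_− = 𝒢 ∖ 𝒢_+ and 𝒢_{≠0} = 𝒢 ∖ 𝒢_0. Then (i) Q_{M*} = Π_{H∈ℬ} α_H^{n_H(M*)} · Π_{H∈𝒢_{≠0}} α_H^{e_H(r−n_{0,H}(M)) − n_H(M)}, and (ii) Q_{χ·det_M} = Π_{H∈ℬ} α_H^{n_H(χ·det_M)} · Π_{H∈𝒢_−} α_H^{n_H(χ)+n_H(M)} · Π_{H∈𝒢_+}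 α_H^{n_H(χ)+n_H(M)−e_H}. -/
open Module LinearMap

/-- The algebra `S(V*)` of polynomial functions on `V` : the subalgebra of functions
`V → k` generated by the linear forms.  (Over an infinite field this is the symmetric
algebra of `V*`.) -/
def polyFuns (k : Type*) [Field k] (V : Type*) [AddCommGroup V] [Module k V] :
    Subalgebra k (V → k) :=
  Algebra.adjoin k (Set.range fun f : Module.Dual k V => ⇑f)

/-- A linear form, seen as an element of `S(V*)`. -/
def ofLin {k : Type*} [Field k] {V : Type*} [AddCommGroup V] [Module k V]
    (f : Module.Dual k V) : polyFuns k V :=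
  ⟨⇑f, Algebra.subset_adjoin (Set.mem_range_self f)⟩


section Aux
open Polynomial Module.End Finset
variable {k : Type*} [Field k]

lemma aux_finrank_ker_dualMap {M : Type*} [AddCommGroup M] [Module k M]
    [FiniteDimensional k M] (f : M →ₗ[k] M) :
    finrank k (LinearMap.ker f.dualMap) = finrank k (LinearMap.ker f) := by
  have h1 := LinearMap.finrank_range_add_finrank_ker f
  have h2 := LinearMap.finrank_range_add_finrank_ker f.dualMap
  have h3 := LinearMap.finrank_range_dualMap_eq_finrank_range f
  have h4 : finrank k (Module.Dual k M) = finrank k M := Subspace.dual_finrank_eq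
  omega

lemma aux_finrank_eigenspace_transpose {M : Type*} [AddCommGroup M] [Module k M]
    [FiniteDimensional k M] (f : M →ₗ[k] M) (μ : k) :
    finrank k (Module.End.eigenspace (Module.Dual.transpose (R := k) f) μ) =
      finrank k (Module.End.eigenspace f μ) := by
  have key : (Module.Dual.transpose (R := k) f : Module.End k (Module.Dual k M)) - μ • 1
      = (f - μ • (1 : Module.End k M)).dualMap := by
    ext φ x
    simp [Module.Dual.transpose_apply, LinearMap.dualMap_apply]
  rw [Module.End.eigenspace_def, Module.End.eigenspace_def, key, aux_finrank_ker_dualMap]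

lemma aux_eigenspace_inv {M : Type*} [AddCommGroup M] [Module k M]
    (A B : Module.End k M) (hAB : A * B = 1) (hBA : B * A = 1) {μ : k} (hμ : μ ≠ 0) :
    Module.End.eigenspace B μ = Module.End.eigenspace A μ⁻¹ := by
  have main : ∀ (A B : Module.End k M), A * B = 1 → B * A = 1 → ∀ (ν : k), ν ≠ 0 →
      Module.End.eigenspace B ν ≤ Module.End.eigenspace A ν⁻¹ := by
    intro A B hAB hBA ν hν x hx
    rw [Module.End.mem_eigenspace_iff] at hx ⊢
    have h1 : x = ν • A x := by
      calc x = (A * B) x := by rw [hAB]; rfl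
      _ = A (B x) := rfl
      _ = ν • A x := by rw [hx, map_smul]
    have h2 : ν⁻¹ • x = A x := by
      conv_lhs => rw [h1]
      rw [smul_smul, inv_mul_cancel₀ hν, one_smul]
    exact h2.symm
  apply le_antisymm (main A B hAB hBA μ hμ)
  have := main B A hBA hAB μ⁻¹ (inv_ne_zero hμ)
  rwa [inv_inv] at this

lemma aux_spectral {M : Type*} [AddCommGroup M] [Module k M] [FiniteDimensional k M]
    [IsAlgClosed k] (A : Module.End k M) {e : ℕ} {ζ : k} (he : 0 < e)
    (hζ : IsPrimitiveRoot ζ e) (hA : A ^ e = 1) (hce : (e : k) ≠ 0) :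
    (∑ j ∈ Finset.range e, finrank k (Module.End.eigenspace A (ζ ^ j)) = finrank k M) ∧
    LinearMap.det (A : M →ₗ[k] M) =
      ∏ j ∈ Finset.range e, ζ ^ (j * finrank k (Module.End.eigenspace A (ζ ^ j))) := by
  classical
  have hsf : A.IsFinitelySemisimple := by
    have hsq : Squarefree ((X : k[X]) ^ e - 1) :=
      (Polynomial.X_pow_sub_one_separable_iff.mpr hce).squarefree
    have hz : Polynomial.aeval A ((X : k[X]) ^ e - 1) = 0 := by
      simp [hA]
    exact (Module.End.isSemisimple_of_squarefree_aeval_eq_zero hsq hz).isFinitelySemisimple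
  have hroot : ∀ μ : k, Module.End.eigenspace A μ ≠ ⊥ → ∃ j < e, ζ ^ j = μ := by
    intro μ hμ
    have h1 : (minpoly k A).IsRoot μ :=
      (Module.End.hasEigenvalue_iff_isRoot).mp hμ
    have h2 : minpoly k A ∣ (X : k[X]) ^ e - 1 := minpoly.dvd _ _ (by simp [hA])
    have h3 : μ ^ e = 1 := by
      have h4 := h1.dvd h2
      rw [Polynomial.IsRoot, Polynomial.eval_sub, Polynomial.eval_pow, Polynomial.eval_X,
        Polynomial.eval_one, sub_eq_zero] at h4
      exact h4
    haveI : NeZero e := ⟨he.ne'⟩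
    exact hζ.eq_pow_of_pow_eq_one h3
  have hint : DirectSum.IsInternal (fun j : Fin e => Module.End.eigenspace A (ζ ^ (j : ℕ))) := by
    rw [DirectSum.isInternal_submodule_iff_iSupIndep_and_iSup_eq_top]
    refine ⟨A.eigenspaces_iSupIndep.comp ?_, ?_⟩
    · intro i j hij
      exact Fin.ext (hζ.pow_inj i.isLt j.isLt hij)
    · apply le_antisymm le_top
      have htop : ⨆ μ : k, Module.End.eigenspace A μ = ⊤ := by
        have h5 := Module.End.iSup_maxGenEigenspace_eq_top A
        have h6 : ∀ μ : k, A.maxGenEigenspace μ = Module.End.eigenspace A μ :=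
          fun μ => hsf.maxGenEigenspace_eq_eigenspace μ
        simp only [h6] at h5
        exact h5
      rw [← htop]
      refine iSup_le fun μ => ?_
      by_cases hb : Module.End.eigenspace A μ = ⊥
      · simp [hb]
      · obtain ⟨j, hj, hjμ⟩ := hroot μ hb
        rw [← hjμ]
        exact le_iSup (fun j : Fin e => Module.End.eigenspace A (ζ ^ (j : ℕ))) ⟨j, hj⟩
  set b : (j : Fin e) → Basis (Fin (finrank k (Module.End.eigenspace A (ζ ^ (j : ℕ))))) k
      (Module.End.eigenspace A (ζ ^ (j : ℕ))) := fun j => Module.finBasis k _ with hb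
  have hcard := Module.finrank_eq_card_basis (hint.collectedBasis b)
  constructor
  · rw [hcard, Fintype.card_sigma]
    simp only [Fintype.card_fin]
    rw [← Fin.sum_univ_eq_sum_range]
  · have hdiag : LinearMap.toMatrix (hint.collectedBasis b) (hint.collectedBasis b) A =
        Matrix.diagonal (fun i : (j : Fin e) ×
          Fin (finrank k (Module.End.eigenspace A (ζ ^ (j : ℕ)))) => ζ ^ (i.1 : ℕ)) := by
      ext i i'
      rw [LinearMap.toMatrix_apply]
      have hmem := hint.collectedBasis_mem b i'
      have happ : A (hint.collectedBasis b i') =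
          ζ ^ ((i'.1 : ℕ)) • hint.collectedBasis b i' :=
        Module.End.mem_eigenspace_iff.mp hmem
      rw [happ, map_smul, Basis.repr_self]
      rcases eq_or_ne i i' with rfl | h
      · simp
      · simp [Matrix.diagonal_apply_ne _ h, Finsupp.single_apply, Ne.symm h]
    rw [← LinearMap.det_toMatrix (hint.collectedBasis b), hdiag, Matrix.det_diagonal]
    rw [← Finset.univ_sigma_univ, Finset.prod_sigma]
    simp only [Finset.prod_const, Finset.card_univ, Fintype.card_fin, ← pow_mul]
    rw [← Fin.prod_univ_eq_prod_range]

lemma aux_rep_facts {G : Type*} [Group G] {M : Type*} [AddCommGroup M] [Module k M]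
    [FiniteDimensional k M] [IsAlgClosed k]
    (ρ : Representation k G M) (s : G) {e : ℕ} {ζ : k} (he : 0 < e) (hζ : IsPrimitiveRoot ζ e)
    (hs : s ^ e = 1) (hce : (e : k) ≠ 0) (r : ℕ) (hr : finrank k M = r) :
    (nH ρ s ζ e + nH ρ.dual s ζ e = e * (r - nJ ρ s ζ 0) ∧ nJ ρ s ζ 0 ≤ r)
    ∧ (nH ρ s ζ e = 0 → nH ρ.dual s ζ e = 0)
    ∧ LinearMap.det (ρ s) = ζ ^ nH ρ.dual s ζ e := by
  have hA : (ρ s) ^ e = 1 := by rw [← map_pow, hs, map_one]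
  have hζ0 : ζ ≠ 0 := hζ.ne_zero he.ne'
  have hζe : ζ ^ e = 1 := hζ.pow_eq_one
  set m : ℕ → ℕ := fun j => finrank k (Module.End.eigenspace (ρ s) (ζ ^ j)) with hm
  have hdualJ : ∀ j : ℕ, nJ ρ.dual s ζ j = m j := by
    intro j
    unfold nJ
    rw [Representation.dual_apply, aux_finrank_eigenspace_transpose,
      Representation.dual_apply, inv_inv, aux_finrank_eigenspace_transpose]
  have hJ : ∀ j : ℕ, j ≤ e → nJ ρ s ζ j = m (e - j) := by
    intro j hj
    unfold nJ
    rw [Representation.dual_apply, aux_finrank_eigenspace_transpose]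
    have hinv : (ζ ^ j)⁻¹ = ζ ^ (e - j) := by
      apply inv_eq_of_mul_eq_one_right
      rw [← pow_add, Nat.add_sub_cancel' hj, hζe]
    rw [aux_eigenspace_inv (ρ s) (ρ s⁻¹)
      (by rw [← map_mul, mul_inv_cancel, map_one])
      (by rw [← map_mul, inv_mul_cancel, map_one])
      (pow_ne_zero j hζ0), hinv]
  have hm0 : nJ ρ s ζ 0 = m 0 := by
    rw [hJ 0 (Nat.zero_le e), Nat.sub_zero]
    have h5 : ζ ^ e = ζ ^ 0 := by rw [hζe, pow_zero]
    simp only [hm]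
    rw [h5]
  obtain ⟨hsum, hdet⟩ := aux_spectral (ρ s) he hζ hA hce
  rw [hr] at hsum
  have hnstar : nH ρ.dual s ζ e = ∑ j ∈ Finset.range e, j * m j := by
    unfold nH
    exact Finset.sum_congr rfl fun j _ => by rw [hdualJ]
  have hn : nH ρ s ζ e = ∑ j ∈ Finset.range e, j * m (e - j) := by
    unfold nH
    refine Finset.sum_congr rfl fun j hj => ?_
    rw [hJ j (le_of_lt (Finset.mem_range.mp hj))]
  -- drop the j = 0 term
  have h0 : ∀ g : ℕ → ℕ, ∑ j ∈ Finset.range e, j * g j = ∑ j ∈ Finset.Ico 1 e, j * g j := by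
    intro g
    refine (Finset.sum_subset ?_ ?_).symm
    · intro x hx
      rw [Finset.mem_Ico] at hx
      exact Finset.mem_range.mpr hx.2
    · intro x hx hx'
      rw [Finset.mem_range] at hx
      rw [Finset.mem_Ico] at hx'
      have : x = 0 := by omega
      simp [this]
  have hrefl : ∑ j ∈ Finset.Ico 1 e, j * m (e - j) = ∑ j ∈ Finset.Ico 1 e, (e - j) * m j := by
    refine Finset.sum_nbij' (fun j => e - j) (fun j => e - j) ?_ ?_ ?_ ?_ ?_ <;>
      (intro a ha; rw [Finset.mem_Ico] at ha; try dsimp only)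
    · rw [Finset.mem_Ico]; omega
    · rw [Finset.mem_Ico]; omega
    · omega
    · omega
    · have hae : e - (e - a) = a := by omega
      rw [hae]
  have hnIco : nH ρ s ζ e = ∑ j ∈ Finset.Ico 1 e, (e - j) * m j := by
    rw [hn, h0, hrefl]
  have hnstarIco : nH ρ.dual s ζ e = ∑ j ∈ Finset.Ico 1 e, j * m j := by
    rw [hnstar, h0]
  have hsplit : m 0 + ∑ j ∈ Finset.Ico 1 e, m j = r := by
    rw [← hsum, Finset.range_eq_Ico, Finset.sum_eq_sum_Ico_succ_bot he]
  refine ⟨⟨?_, ?_⟩, ?_, ?_⟩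
  · rw [hnIco, hnstarIco, hm0, ← Finset.sum_add_distrib]
    have : ∀ j ∈ Finset.Ico 1 e, (e - j) * m j + j * m j = e * m j := by
      intro j hj
      rw [Finset.mem_Ico] at hj
      have : e - j + j = e := by omega
      rw [← add_mul, this]
    rw [Finset.sum_congr rfl this, ← Finset.mul_sum]
    congr 1
    omega
  · rw [hm0]; omega
  · intro hzero
    rw [hnIco] at hzero
    rw [hnstarIco]
    refine Finset.sum_eq_zero fun j hj => ?_
    have hj' := Finset.mem_Ico.mp hj
    have := (Finset.sum_eq_zero_iff).mp hzero j hj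
    have hmj : m j = 0 := by
      rcases Nat.mul_eq_zero.mp this with h | h
      · omega
      · exact h
    rw [hmj, Nat.mul_zero]
  · rw [hdet, hnstar, Finset.prod_pow_eq_pow_sum]


lemma aux_pow_mod {M₀ : Type*} [Monoid M₀] {ζ : M₀} {e : ℕ} (hζe : ζ ^ e = 1) (a : ℕ) :
    ζ ^ (a % e) = ζ ^ a := by
  conv_rhs => rw [← Nat.div_add_mod a e]
  rw [pow_add, pow_mul, hζe, one_pow, one_mul]

end Aux

/-- polynomial identities for `Q_{M*}` and `Q_{χ·det_M}`. -/
theorem statement9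
    {k : Type*} [Field k] [CharZero k] [IsAlgClosed k]
    {V : Type*} [AddCommGroup V] [Module k V] [FiniteDimensional k V]
    [DecidableEq (Submodule k V)]
    (G : Subgroup (V →ₗ[k] V)ˣ) (hGfin : Finite G) (hG : IsReflectionGroup G)
    {M : Type*} [AddCommGroup M] [Module k M] [FiniteDimensional k M]
    (ρM : Representation k G M) (r : ℕ) (hr : Module.finrank k M = r)
    -- the (finite) set of reflecting hyperplanes and the data attached to each of them
    (HypF : Finset (Submodule k V)) (hHypF : ↑HypF = reflHyperplanes G)
    (α : Submodule k V → Module.Dual k V) (hα : ∀ H ∈ HypF, LinearMap.ker (α H) = H)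
    (eF : Submodule k V → ℕ) (sF : Submodule k V → G) (ζF : Submodule k V → k)
    (hfix : ∀ H ∈ HypF, ∀ v ∈ H, ((sF H : (V →ₗ[k] V)ˣ) : V →ₗ[k] V) v = v)
    (hgen : ∀ H ∈ HypF, ∀ g : G,
      (∀ v ∈ H, ((g : (V →ₗ[k] V)ˣ) : V →ₗ[k] V) v = v) → g ∈ Subgroup.zpowers (sF H))
    (he : ∀ H ∈ HypF, orderOf (sF H) = eF H)
    (hdet : ∀ H ∈ HypF, LinearMap.det ((sF H : (V →ₗ[k] V)ˣ) : V →ₗ[k] V) = ζF H)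
    (hζ : ∀ H ∈ HypF, IsPrimitiveRoot (ζF H) (eF H))
    -- a linear character `χ` and the integers `n_H(χ)`, `n_H(χ·det_M)`
    (χ : G →* kˣ) (nχf : Submodule k V → ℕ)
    (hnχ : ∀ H ∈ HypF, nχf H < eF H ∧ (χ (sF H) : k) = (ζF H ^ nχf H)⁻¹)
    (nχd : Submodule k V → ℕ)
    (hnχd : ∀ H ∈ HypF, nχd H < eF H ∧
      (χ (sF H) : k) * LinearMap.det (ρM (sF H)) = (ζF H ^ nχd H)⁻¹)
    -- the `G`-stable set `ℬ ⊆ 𝓗` of "bad" hyperplanes; `𝒢 = 𝓗 ∖ ℬ`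
    (BF : Finset (Submodule k V)) (hBF : BF ⊆ HypF)
    (hBstable : ∀ g ∈ G, ∀ H ∈ BF, Submodule.map (g : V →ₗ[k] V) H ∈ BF)
    -- hypothesis : every hyperplane of `𝒢` is `M`-good
    (hgood : ∀ H ∈ HypF \ BF, nH ρM (sF H) (ζF H) (eF H) < eF H) :
    -- (i) `Q_{M*} = ∏_{H ∈ ℬ} α_H^{n_H(M*)} ∏_{H ∈ 𝒢_{≠0}} α_H^{e_H(r - n_{0,H}(M)) - n_H(M)}`
    (∏ H ∈ HypF, ofLin (α H) ^ nH ρM.dual (sF H) (ζF H) (eF H) =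
      (∏ H ∈ BF, ofLin (α H) ^ nH ρM.dual (sF H) (ζF H) (eF H)) *
      ∏ H ∈ (HypF \ BF).filter (fun H => nH ρM (sF H) (ζF H) (eF H) ≠ 0),
        ofLin (α H) ^ (eF H * (r - nJ ρM (sF H) (ζF H) 0) - nH ρM (sF H) (ζF H) (eF H))) ∧
    -- (ii) `Q_{χ·det_M} = ∏_{H ∈ ℬ} α_H^{n_H(χ·det_M)} ∏_{H ∈ 𝒢_-} α_H^{n_H(χ)+n_H(M)}`
    --      `∏_{H ∈ 𝒢_+} α_H^{n_H(χ)+n_H(M)-e_H}`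
    (∏ H ∈ HypF, ofLin (α H) ^ nχd H =
      (∏ H ∈ BF, ofLin (α H) ^ nχd H) *
      (∏ H ∈ (HypF \ BF).filter
          (fun H => ¬ (eF H - nχf H ≤ nH ρM (sF H) (ζF H) (eF H))),
        ofLin (α H) ^ (nχf H + nH ρM (sF H) (ζF H) (eF H))) *
      ∏ H ∈ (HypF \ BF).filter
          (fun H => eF H - nχf H ≤ nH ρM (sF H) (ζF H) (eF H)),
        ofLin (α H) ^ (nχf H + nH ρM (sF H) (ζF H) (eF H) - eF H)) := by
  classical
  have hGf : Finite G := hGfin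
  have hE : ∀ H ∈ HypF, 0 < eF H ∧ (sF H) ^ (eF H) = 1 := by
    intro H hH
    have h1 := he H hH
    constructor
    · rw [← h1]; exact orderOf_pos (sF H)
    · rw [← h1]; exact pow_orderOf_eq_one (sF H)
  have key : ∀ H ∈ HypF,
      (nH ρM (sF H) (ζF H) (eF H) + nH ρM.dual (sF H) (ζF H) (eF H)
          = eF H * (r - nJ ρM (sF H) (ζF H) 0) ∧ nJ ρM (sF H) (ζF H) 0 ≤ r)
      ∧ (nH ρM (sF H) (ζF H) (eF H) = 0 → nH ρM.dual (sF H) (ζF H) (eF H) = 0)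
      ∧ LinearMap.det (ρM (sF H)) = ζF H ^ nH ρM.dual (sF H) (ζF H) (eF H) := by
    intro H hH
    obtain ⟨hpos, hpow⟩ := hE H hH
    exact aux_rep_facts ρM (sF H) hpos (hζ H hH) hpow
      (Nat.cast_ne_zero.mpr hpos.ne') r hr
  constructor
  · rw [← Finset.prod_sdiff hBF, mul_comm]
    congr 1
    have h2 : ∏ H ∈ (HypF \ BF).filter
        (fun H => ¬ nH ρM (sF H) (ζF H) (eF H) ≠ 0),
        ofLin (α H) ^ nH ρM.dual (sF H) (ζF H) (eF H) = 1 := by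
      refine Finset.prod_eq_one fun H hH => ?_
      rw [Finset.mem_filter] at hH
      rw [(key H (Finset.mem_sdiff.mp hH.1).1).2.1 (not_not.mp hH.2), pow_zero]
    conv_lhs => rw [← Finset.prod_filter_mul_prod_filter_not (HypF \ BF)
      (fun H => nH ρM (sF H) (ζF H) (eF H) ≠ 0)]
    rw [h2, mul_one]
    refine Finset.prod_congr rfl fun H hH => ?_
    rw [Finset.mem_filter] at hH
    obtain ⟨⟨hsum, hle⟩, -, -⟩ := key H (Finset.mem_sdiff.mp hH.1).1
    congr 1
    generalize eF H * (r - nJ ρM (sF H) (ζF H) 0) = t at hsum ⊢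
    omega
  · rw [← Finset.prod_sdiff hBF, mul_comm, mul_assoc]
    congr 1
    have hcase : ∀ H ∈ HypF \ BF,
        (¬ (eF H - nχf H ≤ nH ρM (sF H) (ζF H) (eF H)) →
          nχd H = nχf H + nH ρM (sF H) (ζF H) (eF H))
        ∧ ((eF H - nχf H ≤ nH ρM (sF H) (ζF H) (eF H)) →
          nχd H = nχf H + nH ρM (sF H) (ζF H) (eF H) - eF H) := by
      intro H hH'
      have hH := (Finset.mem_sdiff.mp hH').1
      obtain ⟨hpos, hpow⟩ := hE H hH
      obtain ⟨⟨hsum, hler⟩, -, hdet'⟩ := key H hH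
      obtain ⟨hχlt, hχval⟩ := hnχ H hH
      obtain ⟨hdlt, hdval⟩ := hnχd H hH
      have hglt := hgood H hH'
      have hζe : (ζF H) ^ (eF H) = 1 := (hζ H hH).pow_eq_one
      have hζ0 : (ζF H) ≠ 0 := (hζ H hH).ne_zero hpos.ne'
      set e := eF H with hedef
      set n := nH ρM (sF H) (ζF H) (eF H) with hndef
      set ns := nH ρM.dual (sF H) (ζF H) (eF H) with hnsdef
      set a := nχf H with hadef
      set d := nχd H with hddef
      have hpoweq : (ζF H) ^ (ns + d) = (ζF H) ^ a := by
        have h1 : ((ζF H) ^ a)⁻¹ * ((ζF H) ^ ns) = ((ζF H) ^ d)⁻¹ := by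
          rw [← hχval, ← hdet']; exact hdval
        have ha0 : (ζF H) ^ a ≠ 0 := pow_ne_zero _ hζ0
        have hd0 : (ζF H) ^ d ≠ 0 := pow_ne_zero _ hζ0
        rw [pow_add]
        field_simp at h1
        linear_combination h1
      have hmod : (ns + d) % e = a % e := by
        refine (hζ H hH).pow_inj (Nat.mod_lt _ hpos) (Nat.mod_lt _ hpos) ?_
        rw [aux_pow_mod hζe, aux_pow_mod hζe, hpoweq]
      have hdvd1 : (e : ℤ) ∣ (a : ℤ) - ((ns : ℤ) + d) := by
        have h6 : (ns + d) ≡ a [MOD e] := hmod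
        have h7 := h6.dvd
        push_cast at h7
        exact h7
      have hdvd2 : (e : ℤ) ∣ (n : ℤ) + ns := by
        have h8 : (e : ℤ) ∣ ((n + ns : ℕ) : ℤ) := by
          rw [hsum]
          exact Int.natCast_dvd_natCast.mpr ⟨_, rfl⟩
        push_cast at h8
        exact h8
      have hdvd : (e : ℤ) ∣ ((a : ℤ) + n - d) := by
        have h9 := dvd_add hdvd1 hdvd2
        have h10 : (a : ℤ) - ((ns : ℤ) + d) + ((n : ℤ) + ns) = (a : ℤ) + n - d := by ring
        rwa [h10] at h9
      constructor
      · intro hnotle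
        have hzero : (a : ℤ) + n - d = 0 := by
          refine Int.eq_zero_of_abs_lt_dvd hdvd ?_
          rw [abs_lt]
          constructor <;> omega
        omega
      · intro hle
        have hzero : (a : ℤ) + n - d - e = 0 := by
          refine Int.eq_zero_of_abs_lt_dvd (dvd_sub hdvd (dvd_refl _)) ?_
          rw [abs_lt]
          constructor <;> omega
        omega
    conv_lhs => rw [← Finset.prod_filter_mul_prod_filter_not (HypF \ BF)
      (fun H => eF H - nχf H ≤ nH ρM (sF H) (ζF H) (eF H))]
    rw [mul_comm]
    congr 1
    · refine Finset.prod_congr rfl fun H hH => ?_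
      rw [Finset.mem_filter] at hH
      rw [(hcase H hH.1).1 hH.2]
    · refine Finset.prod_congr rfl fun H hH => ?_
      rw [Finset.mem_filter] at hH
      rw [(hcase H hH.1).2 hH.2]
end
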